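/- arXiv:2010.06162 — 2 statements merged into one kernel-verified Lean document; each statement's English description precedes it below -/
import Mathlib

section
/- Sliding a tie endpoint across a pre-crossing (relation (i) of the generalized-tie relations in the tied pseudo braid monoid): for every n ≥ 2 and all indices 1 ≤ i and i+1 < j ≤ n, the equality p_i η_{i,j} = η_{i+1,j} p_i holds in the tied pseudo braid monoid TPM_n. -/
/-!
The tied pseudo braid monoid `TPM n` (n ≥ 2), presented by generators
σ_1,…,σ_{n−1}, σ_1⁻¹,…,σ_{n−1}⁻¹, p_1,…,p_{n−1}, η_1,…,η_{n−1} subject to the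
relations listed in the inductive `TPMRel` below.
-/

/-- Generators of the tied pseudo braid monoid: σ_i, σ_i⁻¹, p_i and η_i for 1 ≤ i ≤ n−1. -/
inductive TPMGen (n : ℕ) : Type
  | sig (i : ℕ) (h : 1 ≤ i ∧ i ≤ n - 1) : TPMGen n
  | sigInv (i : ℕ) (h : 1 ≤ i ∧ i ≤ n - 1) : TPMGen n
  | p (i : ℕ) (h : 1 ≤ i ∧ i ≤ n - 1) : TPMGen n
  | eta (i : ℕ) (h : 1 ≤ i ∧ i ≤ n - 1) : TPMGen n

/-- The word σ_i in the free monoid on the generators. -/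
def wS (n i : ℕ) : FreeMonoid (TPMGen n) :=
  if h : 1 ≤ i ∧ i ≤ n - 1 then FreeMonoid.of (TPMGen.sig i h) else 1

/-- The word σ_i⁻¹ in the free monoid on the generators. -/
def wSI (n i : ℕ) : FreeMonoid (TPMGen n) :=
  if h : 1 ≤ i ∧ i ≤ n - 1 then FreeMonoid.of (TPMGen.sigInv i h) else 1

/-- The word p_i in the free monoid on the generators. -/
def wP (n i : ℕ) : FreeMonoid (TPMGen n) :=
  if h : 1 ≤ i ∧ i ≤ n - 1 then FreeMonoid.of (TPMGen.p i h) else 1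

/-- The word η_i in the free monoid on the generators. -/
def wE (n i : ℕ) : FreeMonoid (TPMGen n) :=
  if h : 1 ≤ i ∧ i ≤ n - 1 then FreeMonoid.of (TPMGen.eta i h) else 1

/-- The defining relations of the tied pseudo braid monoid `TPM n`. -/
inductive TPMRel (n : ℕ) : FreeMonoid (TPMGen n) → FreeMonoid (TPMGen n) → Prop
  /- σ_i σ_i⁻¹ = σ_i⁻¹ σ_i = 1 -/
  | inv_right (i : ℕ) (h : 1 ≤ i ∧ i ≤ n - 1) :
      TPMRel n (wS n i * wSI n i) 1
  | inv_left (i : ℕ) (h : 1 ≤ i ∧ i ≤ n - 1) :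
      TPMRel n (wSI n i * wS n i) 1
  /- σ_i σ_{i+1} σ_i = σ_{i+1} σ_i σ_{i+1} -/
  | braid (i : ℕ) (h : 1 ≤ i ∧ i + 1 ≤ n - 1) :
      TPMRel n (wS n i * wS n (i+1) * wS n i) (wS n (i+1) * wS n i * wS n (i+1))
  /- σ_i σ_j = σ_j σ_i for |i−j| ≥ 2 -/
  | sig_comm (i j : ℕ) (hi : 1 ≤ i ∧ i ≤ n - 1) (hj : 1 ≤ j ∧ j ≤ n - 1)
      (hij : i + 2 ≤ j ∨ j + 2 ≤ i) :
      TPMRel n (wS n i * wS n j) (wS n j * wS n i)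
  /- p_i p_j = p_j p_i for |i−j| ≥ 2 -/
  | p_comm (i j : ℕ) (hi : 1 ≤ i ∧ i ≤ n - 1) (hj : 1 ≤ j ∧ j ≤ n - 1)
      (hij : i + 2 ≤ j ∨ j + 2 ≤ i) :
      TPMRel n (wP n i * wP n j) (wP n j * wP n i)
  /- p_i σ_j^{±1} = σ_j^{±1} p_i for |i−j| ≥ 2 -/
  | p_sig_far_pos (i j : ℕ) (hi : 1 ≤ i ∧ i ≤ n - 1) (hj : 1 ≤ j ∧ j ≤ n - 1)
      (hij : i + 2 ≤ j ∨ j + 2 ≤ i) :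
      TPMRel n (wP n i * wS n j) (wS n j * wP n i)
  | p_sig_far_neg (i j : ℕ) (hi : 1 ≤ i ∧ i ≤ n - 1) (hj : 1 ≤ j ∧ j ≤ n - 1)
      (hij : i + 2 ≤ j ∨ j + 2 ≤ i) :
      TPMRel n (wP n i * wSI n j) (wSI n j * wP n i)
  /- p_i σ_i^{±1} = σ_i^{±1} p_i -/
  | p_sig_pos (i : ℕ) (h : 1 ≤ i ∧ i ≤ n - 1) :
      TPMRel n (wP n i * wS n i) (wS n i * wP n i)
  | p_sig_neg (i : ℕ) (h : 1 ≤ i ∧ i ≤ n - 1) :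
      TPMRel n (wP n i * wSI n i) (wSI n i * wP n i)
  /- σ_i σ_{i+1} p_i = p_{i+1} σ_i σ_{i+1} -/
  | ssp (i : ℕ) (h : 1 ≤ i ∧ i + 1 ≤ n - 1) :
      TPMRel n (wS n i * wS n (i+1) * wP n i) (wP n (i+1) * wS n i * wS n (i+1))
  /- σ_{i+1} σ_i p_{i+1} = p_i σ_{i+1} σ_i -/
  | ssp' (i : ℕ) (h : 1 ≤ i ∧ i + 1 ≤ n - 1) :
      TPMRel n (wS n (i+1) * wS n i * wP n (i+1)) (wP n i * wS n (i+1) * wS n i)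
  /- η_i η_j = η_j η_i for all i, j -/
  | eta_comm (i j : ℕ) (hi : 1 ≤ i ∧ i ≤ n - 1) (hj : 1 ≤ j ∧ j ≤ n - 1) :
      TPMRel n (wE n i * wE n j) (wE n j * wE n i)
  /- η_i σ_i = σ_i η_i -/
  | eta_sig (i : ℕ) (h : 1 ≤ i ∧ i ≤ n - 1) :
      TPMRel n (wE n i * wS n i) (wS n i * wE n i)
  /- η_i σ_j = σ_j η_i for |i−j| ≥ 2 -/
  | eta_sig_far (i j : ℕ) (hi : 1 ≤ i ∧ i ≤ n - 1) (hj : 1 ≤ j ∧ j ≤ n - 1)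
      (hij : i + 2 ≤ j ∨ j + 2 ≤ i) :
      TPMRel n (wE n i * wS n j) (wS n j * wE n i)
  /- η_i σ_j σ_i^ε = σ_j σ_i^ε η_j for |i−j| = 1, ε = ±1 -/
  | eta_slide_pos (i j : ℕ) (hi : 1 ≤ i ∧ i ≤ n - 1) (hj : 1 ≤ j ∧ j ≤ n - 1)
      (hij : j = i + 1 ∨ i = j + 1) :
      TPMRel n (wE n i * wS n j * wS n i) (wS n j * wS n i * wE n j)
  | eta_slide_neg (i j : ℕ) (hi : 1 ≤ i ∧ i ≤ n - 1) (hj : 1 ≤ j ∧ j ≤ n - 1)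
      (hij : j = i + 1 ∨ i = j + 1) :
      TPMRel n (wE n i * wS n j * wSI n i) (wS n j * wSI n i * wE n j)
  /- η_i η_j σ_i = η_j σ_i η_j = σ_i η_i η_j for |i−j| = 1 -/
  | eta_eta_sig₁ (i j : ℕ) (hi : 1 ≤ i ∧ i ≤ n - 1) (hj : 1 ≤ j ∧ j ≤ n - 1)
      (hij : j = i + 1 ∨ i = j + 1) :
      TPMRel n (wE n i * wE n j * wS n i) (wE n j * wS n i * wE n j)
  | eta_eta_sig₂ (i j : ℕ) (hi : 1 ≤ i ∧ i ≤ n - 1) (hj : 1 ≤ j ∧ j ≤ n - 1)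
      (hij : j = i + 1 ∨ i = j + 1) :
      TPMRel n (wE n j * wS n i * wE n j) (wS n i * wE n i * wE n j)
  /- η_i² = η_i -/
  | eta_idem (i : ℕ) (h : 1 ≤ i ∧ i ≤ n - 1) :
      TPMRel n (wE n i * wE n i) (wE n i)
  /- p_i η_i = η_i p_i -/
  | p_eta (i : ℕ) (h : 1 ≤ i ∧ i ≤ n - 1) :
      TPMRel n (wP n i * wE n i) (wE n i * wP n i)
  /- p_i η_j = η_j p_i for |i−j| ≥ 2 -/
  | p_eta_far (i j : ℕ) (hi : 1 ≤ i ∧ i ≤ n - 1) (hj : 1 ≤ j ∧ j ≤ n - 1)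
      (hij : i + 2 ≤ j ∨ j + 2 ≤ i) :
      TPMRel n (wP n i * wE n j) (wE n j * wP n i)
  /- η_i p_j p_i = p_j p_i η_j for |i−j| = 1 -/
  | eta_pp (i j : ℕ) (hi : 1 ≤ i ∧ i ≤ n - 1) (hj : 1 ≤ j ∧ j ≤ n - 1)
      (hij : j = i + 1 ∨ i = j + 1) :
      TPMRel n (wE n i * wP n j * wP n i) (wP n j * wP n i * wE n j)
  /- η_i η_j p_i = η_j p_i η_j = p_i η_i η_j for |i−j| = 1 -/
  | eta_eta_p₁ (i j : ℕ) (hi : 1 ≤ i ∧ i ≤ n - 1) (hj : 1 ≤ j ∧ j ≤ n - 1)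
      (hij : j = i + 1 ∨ i = j + 1) :
      TPMRel n (wE n i * wE n j * wP n i) (wE n j * wP n i * wE n j)
  | eta_eta_p₂ (i j : ℕ) (hi : 1 ≤ i ∧ i ≤ n - 1) (hj : 1 ≤ j ∧ j ≤ n - 1)
      (hij : j = i + 1 ∨ i = j + 1) :
      TPMRel n (wE n j * wP n i * wE n j) (wP n i * wE n i * wE n j)
  /- η_i p_j σ_i = p_j σ_i η_j for |i−j| = 1 -/
  | eta_ps (i j : ℕ) (hi : 1 ≤ i ∧ i ≤ n - 1) (hj : 1 ≤ j ∧ j ≤ n - 1)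
      (hij : j = i + 1 ∨ i = j + 1) :
      TPMRel n (wE n i * wP n j * wS n i) (wP n j * wS n i * wE n j)
  /- η_i σ_j p_i = σ_j p_i η_j for |i−j| = 1 -/
  | eta_sp (i j : ℕ) (hi : 1 ≤ i ∧ i ≤ n - 1) (hj : 1 ≤ j ∧ j ≤ n - 1)
      (hij : j = i + 1 ∨ i = j + 1) :
      TPMRel n (wE n i * wS n j * wP n i) (wS n j * wP n i * wE n j)
  /- p_i η_j = σ_i η_j σ_i⁻¹ p_i for |i−j| = 1 -/
  | p_eta_conj (i j : ℕ) (hi : 1 ≤ i ∧ i ≤ n - 1) (hj : 1 ≤ j ∧ j ≤ n - 1)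
      (hij : j = i + 1 ∨ i = j + 1) :
      TPMRel n (wP n i * wE n j) (wS n i * wE n j * wSI n i * wP n i)

/-- The tied pseudo braid monoid `TPM n`: the quotient of the free monoid on the
generators by the congruence generated by the defining relations. -/
def TPM (n : ℕ) := (conGen (TPMRel n)).Quotient

instance (n : ℕ) : Monoid (TPM n) :=
  inferInstanceAs (Monoid ((conGen (TPMRel n)).Quotient))

/-- The generator σ_i of `TPM n` (defined for 1 ≤ i ≤ n−1; junk value 1 otherwise). -/
def TPM.s (n i : ℕ) : TPM n := (conGen (TPMRel n)).mk' (wS n i)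

/-- The generator σ_i⁻¹ of `TPM n` (defined for 1 ≤ i ≤ n−1; junk value 1 otherwise). -/
def TPM.sInv (n i : ℕ) : TPM n := (conGen (TPMRel n)).mk' (wSI n i)

/-- The generator p_i of `TPM n` (defined for 1 ≤ i ≤ n−1; junk value 1 otherwise). -/
def TPM.p (n i : ℕ) : TPM n := (conGen (TPMRel n)).mk' (wP n i)

/-- The generator η_i of `TPM n` (defined for 1 ≤ i ≤ n−1; junk value 1 otherwise). -/
def TPM.e (n i : ℕ) : TPM n := (conGen (TPMRel n)).mk' (wE n i)

/-- The generalized tie η_{i,j} = σ_i σ_{i+1} ⋯ σ_{j−2} η_{j−1} σ_{j−2}⁻¹ ⋯ σ_{i+1}⁻¹ σ_i⁻¹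
in `TPM n`, for 1 ≤ i < j ≤ n (in particular η_{i,i+1} = η_i). -/
def TPM.genTie (n i j : ℕ) : TPM n :=
  (((List.range' i (j - 1 - i)).map (TPM.s n)).prod) * TPM.e n (j - 1) *
    (((List.range' i (j - 1 - i)).reverse.map (TPM.sInv n)).prod)

namespace TPMAux

private lemma hswap {M : Type*} [Monoid M] {a b c d : M} (h : a * b = c * d) (x : M) :
    a * (b * x) = c * (d * x) := by rw [← mul_assoc, h, mul_assoc]

private lemma h3 {M : Type*} [Monoid M] {a b c d e f : M} (h : a * b * c = d * e * f) (x : M) :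
    a * (b * (c * x)) = d * (e * (f * x)) := by
  rw [← mul_assoc, ← mul_assoc, h, mul_assoc, mul_assoc]

private lemma h24 {M : Type*} [Monoid M] {a b c d e f : M} (h : a * b = c * d * e * f) (x : M) :
    a * (b * x) = c * (d * (e * (f * x))) := by
  rw [← mul_assoc, h, mul_assoc, mul_assoc, mul_assoc]

private lemma hcancel {M : Type*} [Monoid M] {a b : M} (h : a * b = 1) (x : M) :
    a * (b * x) = x := by rw [← mul_assoc, h, one_mul]

private lemma conj_comm' {M : Type*} [Monoid M] {u v a : M} (huv : u * v = 1) (hvu : v * u = 1)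
    (h : a * u = u * a) : v * a = a * v :=
  calc v * a = v * (a * (u * v)) := by rw [huv, mul_one]
    _ = v * (u * (a * v)) := by rw [← mul_assoc a, h, mul_assoc]
    _ = a * v := by rw [← mul_assoc, hvu, one_mul]

variable {n : ℕ}

private lemma req {a b : FreeMonoid (TPMGen n)} (h : TPMRel n a b) :
    ((conGen (TPMRel n)).mk' a : TPM n) = (conGen (TPMRel n)).mk' b :=
  ((conGen (TPMRel n)).eq).mpr (ConGen.Rel.of a b h)

private lemma s_si (i : ℕ) (h1 : 1 ≤ i) (h2 : i + 1 ≤ n) : TPM.s n i * TPM.sInv n i = 1 := by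
  have h := req (TPMRel.inv_right (n := n) i ⟨h1, by omega⟩)
  simp only [map_mul, map_one] at h
  exact h

private lemma si_s (i : ℕ) (h1 : 1 ≤ i) (h2 : i + 1 ≤ n) : TPM.sInv n i * TPM.s n i = 1 := by
  have h := req (TPMRel.inv_left (n := n) i ⟨h1, by omega⟩)
  simp only [map_mul, map_one] at h
  exact h

private lemma ss_far (i j : ℕ) (hi1 : 1 ≤ i) (hi2 : i + 1 ≤ n) (hj1 : 1 ≤ j) (hj2 : j + 1 ≤ n)
    (hij : i + 2 ≤ j ∨ j + 2 ≤ i) : TPM.s n i * TPM.s n j = TPM.s n j * TPM.s n i := by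
  have h := req (TPMRel.sig_comm (n := n) i j ⟨hi1, by omega⟩ ⟨hj1, by omega⟩ hij)
  simp only [map_mul] at h
  exact h

private lemma p_s (i : ℕ) (h1 : 1 ≤ i) (h2 : i + 1 ≤ n) :
    TPM.p n i * TPM.s n i = TPM.s n i * TPM.p n i := by
  have h := req (TPMRel.p_sig_pos (n := n) i ⟨h1, by omega⟩)
  simp only [map_mul] at h
  exact h

private lemma p_si (i : ℕ) (h1 : 1 ≤ i) (h2 : i + 1 ≤ n) :
    TPM.p n i * TPM.sInv n i = TPM.sInv n i * TPM.p n i := by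
  have h := req (TPMRel.p_sig_neg (n := n) i ⟨h1, by omega⟩)
  simp only [map_mul] at h
  exact h

private lemma p_s_far (i j : ℕ) (hi1 : 1 ≤ i) (hi2 : i + 1 ≤ n) (hj1 : 1 ≤ j) (hj2 : j + 1 ≤ n)
    (hij : i + 2 ≤ j ∨ j + 2 ≤ i) : TPM.p n i * TPM.s n j = TPM.s n j * TPM.p n i := by
  have h := req (TPMRel.p_sig_far_pos (n := n) i j ⟨hi1, by omega⟩ ⟨hj1, by omega⟩ hij)
  simp only [map_mul] at h
  exact h

private lemma p_si_far (i j : ℕ) (hi1 : 1 ≤ i) (hi2 : i + 1 ≤ n) (hj1 : 1 ≤ j) (hj2 : j + 1 ≤ n)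
    (hij : i + 2 ≤ j ∨ j + 2 ≤ i) : TPM.p n i * TPM.sInv n j = TPM.sInv n j * TPM.p n i := by
  have h := req (TPMRel.p_sig_far_neg (n := n) i j ⟨hi1, by omega⟩ ⟨hj1, by omega⟩ hij)
  simp only [map_mul] at h
  exact h

private lemma e_ss (i : ℕ) (h1 : 1 ≤ i) (h2 : i + 2 ≤ n) :
    TPM.e n i * TPM.s n (i+1) * TPM.s n i = TPM.s n (i+1) * TPM.s n i * TPM.e n (i+1) := by
  have h := req (TPMRel.eta_slide_pos (n := n) i (i+1) ⟨h1, by omega⟩ ⟨by omega, by omega⟩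
    (Or.inl rfl))
  simp only [map_mul] at h
  exact h

private lemma e_ssi (i : ℕ) (h1 : 1 ≤ i) (h2 : i + 2 ≤ n) :
    TPM.e n (i+1) * TPM.s n i * TPM.sInv n (i+1)
      = TPM.s n i * TPM.sInv n (i+1) * TPM.e n i := by
  have h := req (TPMRel.eta_slide_neg (n := n) (i+1) i ⟨by omega, by omega⟩ ⟨h1, by omega⟩
    (Or.inr rfl))
  simp only [map_mul] at h
  exact h

private lemma p_e_conj (i : ℕ) (h1 : 1 ≤ i) (h2 : i + 2 ≤ n) :
    TPM.p n i * TPM.e n (i+1)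
      = TPM.s n i * TPM.e n (i+1) * TPM.sInv n i * TPM.p n i := by
  have h := req (TPMRel.p_eta_conj (n := n) i (i+1) ⟨h1, by omega⟩ ⟨by omega, by omega⟩
    (Or.inl rfl))
  simp only [map_mul] at h
  exact h

private lemma si_s_far (i j : ℕ) (hi1 : 1 ≤ i) (hi2 : i + 1 ≤ n) (hj1 : 1 ≤ j) (hj2 : j + 1 ≤ n)
    (hij : i + 2 ≤ j ∨ j + 2 ≤ i) : TPM.sInv n i * TPM.s n j = TPM.s n j * TPM.sInv n i :=
  conj_comm' (s_si i hi1 hi2) (si_s i hi1 hi2) (ss_far j i hj1 hj2 hi1 hi2 hij.symm)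

private lemma s_si_far (i j : ℕ) (hi1 : 1 ≤ i) (hi2 : i + 1 ≤ n) (hj1 : 1 ≤ j) (hj2 : j + 1 ≤ n)
    (hij : i + 2 ≤ j ∨ j + 2 ≤ i) : TPM.s n i * TPM.sInv n j = TPM.sInv n j * TPM.s n i :=
  (si_s_far j i hj1 hj2 hi1 hi2 hij.symm).symm

private lemma ss_e (i : ℕ) (h1 : 1 ≤ i) (h2 : i + 2 ≤ n) (x : TPM n) :
    TPM.e n (i+1) * (TPM.s n i * (TPM.s n i * x))
      = TPM.s n i * (TPM.s n i * (TPM.e n (i+1) * x)) := by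
  have c1 : TPM.sInv n (i+1) * TPM.s n (i+1) = 1 := si_s (i+1) (by omega) (by omega)
  calc TPM.e n (i+1) * (TPM.s n i * (TPM.s n i * x))
      = TPM.e n (i+1) * (TPM.s n i * (TPM.sInv n (i+1) * (TPM.s n (i+1) * (TPM.s n i * x)))) := by
        rw [hcancel c1]
    _ = TPM.s n i * (TPM.sInv n (i+1) * (TPM.e n i * (TPM.s n (i+1) * (TPM.s n i * x)))) :=
        h3 (e_ssi i h1 h2) _
    _ = TPM.s n i * (TPM.sInv n (i+1) * (TPM.s n (i+1) * (TPM.s n i * (TPM.e n (i+1) * x)))) := by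
        rw [h3 (e_ss i h1 h2)]
    _ = TPM.s n i * (TPM.s n i * (TPM.e n (i+1) * x)) := by rw [hcancel c1]

private lemma key2 (i : ℕ) (h1 : 1 ≤ i) (h2 : i + 2 ≤ n) (x : TPM n) :
    TPM.p n i * (TPM.s n i * (TPM.e n (i+1) * (TPM.sInv n i * x)))
      = TPM.e n (i+1) * (TPM.p n i * x) := by
  have cs : TPM.s n i * TPM.sInv n i = 1 := s_si i h1 (by omega)
  calc TPM.p n i * (TPM.s n i * (TPM.e n (i+1) * (TPM.sInv n i * x)))
      = TPM.s n i * (TPM.p n i * (TPM.e n (i+1) * (TPM.sInv n i * x))) :=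
        hswap (p_s i h1 (by omega)) _
    _ = TPM.s n i * (TPM.s n i * (TPM.e n (i+1) * (TPM.sInv n i *
          (TPM.p n i * (TPM.sInv n i * x))))) := by
        rw [h24 (p_e_conj i h1 h2)]
    _ = TPM.s n i * (TPM.s n i * (TPM.e n (i+1) * (TPM.sInv n i *
          (TPM.sInv n i * (TPM.p n i * x))))) := by
        rw [hswap (p_si i h1 (by omega))]
    _ = TPM.e n (i+1) * (TPM.s n i * (TPM.s n i * (TPM.sInv n i *
          (TPM.sInv n i * (TPM.p n i * x))))) := by
        rw [← ss_e i h1 h2]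
    _ = TPM.e n (i+1) * (TPM.p n i * x) := by
        rw [hcancel cs, hcancel cs]

private lemma conjE (k : ℕ) (h1 : 1 ≤ k) (h2 : k + 2 ≤ n) (x : TPM n) :
    TPM.s n k * (TPM.e n (k+1) * (TPM.sInv n k * x))
      = TPM.sInv n (k+1) * (TPM.e n k * (TPM.s n (k+1) * x)) := by
  have c1 : TPM.sInv n (k+1) * TPM.s n (k+1) = 1 := si_s (k+1) (by omega) (by omega)
  have c2 : TPM.s n k * TPM.sInv n k = 1 := s_si k h1 (by omega)
  calc TPM.s n k * (TPM.e n (k+1) * (TPM.sInv n k * x))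
      = TPM.sInv n (k+1) * (TPM.s n (k+1) * (TPM.s n k * (TPM.e n (k+1) *
          (TPM.sInv n k * x)))) := by
        rw [hcancel c1]
    _ = TPM.sInv n (k+1) * (TPM.e n k * (TPM.s n (k+1) * (TPM.s n k *
          (TPM.sInv n k * x)))) := by
        rw [← h3 (e_ss k h1 h2)]
    _ = TPM.sInv n (k+1) * (TPM.e n k * (TPM.s n (k+1) * x)) := by rw [hcancel c2]

private def Lp (n a m : ℕ) : TPM n := ((List.range' a m).map (TPM.s n)).prod

private def Rp (n a m : ℕ) : TPM n := ((List.range' a m).reverse.map (TPM.sInv n)).prod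

private lemma genTie_form (i m : ℕ) :
    TPM.genTie n i (i + m + 1) = Lp n i m * TPM.e n (i + m) * Rp n i m := by
  have hm : i + m + 1 - 1 - i = m := by omega
  have hm2 : i + m + 1 - 1 = i + m := by omega
  show Lp n i (i + m + 1 - 1 - i) * TPM.e n (i + m + 1 - 1) * Rp n i (i + m + 1 - 1 - i)
      = Lp n i m * TPM.e n (i + m) * Rp n i m
  rw [hm, hm2]

private lemma Lp_succ (a m : ℕ) : Lp n a (m+1) = Lp n a m * TPM.s n (a+m) := by
  show ((List.range' a (m+1)).map (TPM.s n)).prod = _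
  rw [List.range'_1_concat, List.map_append, List.prod_append]
  simp [Lp]

private lemma Rp_succ (a m : ℕ) : Rp n a (m+1) = TPM.sInv n (a+m) * Rp n a m := by
  show ((List.range' a (m+1)).reverse.map (TPM.sInv n)).prod = _
  rw [List.range'_1_concat, List.reverse_append]
  simp [Rp]

private lemma Lp_zero (a : ℕ) : Lp n a 0 = 1 := rfl

private lemma Rp_zero (a : ℕ) : Rp n a 0 = 1 := rfl

private lemma Lp_one (a : ℕ) : Lp n a 1 = TPM.s n a := by simp [Lp]

private lemma Rp_one (a : ℕ) : Rp n a 1 = TPM.sInv n a := by simp [Rp]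

private lemma comm_prod {M : Type*} [Monoid M] (x : M) (l : List M)
    (h : ∀ y ∈ l, x * y = y * x) : x * l.prod = l.prod * x := by
  induction l with
  | nil => simp
  | cons a t ih =>
    rw [List.prod_cons, ← mul_assoc, h a (by simp), mul_assoc,
      ih (fun y hy => h y (by simp [hy])), ← mul_assoc]

private lemma Lp_comm (x : TPM n) (a m : ℕ)
    (h : ∀ idx, a ≤ idx → idx < a + m → x * TPM.s n idx = TPM.s n idx * x) :
    x * Lp n a m = Lp n a m * x := by
  apply comm_prod
  intro y hy
  simp only [List.mem_map, List.mem_range'_1] at hy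
  obtain ⟨idx, ⟨ha, hb⟩, rfl⟩ := hy
  exact h idx ha hb

private lemma Rp_comm (x : TPM n) (a m : ℕ)
    (h : ∀ idx, a ≤ idx → idx < a + m → x * TPM.sInv n idx = TPM.sInv n idx * x) :
    x * Rp n a m = Rp n a m * x := by
  apply comm_prod
  intro y hy
  simp only [List.mem_map, List.mem_reverse, List.mem_range'_1] at hy
  obtain ⟨idx, ⟨ha, hb⟩, rfl⟩ := hy
  exact h idx ha hb

private lemma genTie_succ (i m : ℕ) (hi : 1 ≤ i) (hn : i + m + 2 ≤ n) :
    TPM.genTie n i (i + m + 2)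
      = TPM.sInv n (i+m+1) * (TPM.genTie n i (i + m + 1) * TPM.s n (i+m+1)) := by
  have g1 : TPM.genTie n i (i+m+2) = Lp n i (m+1) * TPM.e n (i+m+1) * Rp n i (m+1) :=
    genTie_form i (m+1)
  have hL : TPM.sInv n (i+m+1) * Lp n i m = Lp n i m * TPM.sInv n (i+m+1) :=
    Lp_comm _ i m (fun idx ha hb =>
      si_s_far (i+m+1) idx (by omega) (by omega) (by omega) (by omega) (Or.inr (by omega)))
  have hR : TPM.s n (i+m+1) * Rp n i m = Rp n i m * TPM.s n (i+m+1) :=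
    Rp_comm _ i m (fun idx ha hb =>
      s_si_far (i+m+1) idx (by omega) (by omega) (by omega) (by omega) (Or.inr (by omega)))
  rw [g1, genTie_form i m, Lp_succ, Rp_succ]
  simp only [mul_assoc]
  rw [conjE (i+m) (by omega) (by omega), hswap hL.symm, hR]

private lemma main (m : ℕ) : ∀ i : ℕ, 1 ≤ i → i + m + 2 ≤ n →
    TPM.p n i * TPM.genTie n i (i + m + 2)
      = TPM.genTie n (i+1) (i + m + 2) * TPM.p n i := by
  induction m with
  | zero =>
    intro i hi hn
    have g1 : TPM.genTie n i (i+0+2) = Lp n i 1 * TPM.e n (i+1) * Rp n i 1 := genTie_form i 1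
    have g2 : TPM.genTie n (i+1) (i+0+2) = Lp n (i+1) 0 * TPM.e n (i+1) * Rp n (i+1) 0 :=
      genTie_form (i+1) 0
    rw [g1, g2, Lp_one, Rp_one, Lp_zero, Rp_zero]
    simp only [one_mul, mul_one, mul_assoc]
    have h := key2 i hi (by omega) (1 : TPM n)
    simp only [mul_one] at h
    exact h
  | succ m ih =>
    intro i hi hn
    have g1 : TPM.genTie n i (i+m+2+1)
        = TPM.sInv n (i+m+2) * (TPM.genTie n i (i+m+2) * TPM.s n (i+m+2)) :=
      genTie_succ i (m+1) hi (by omega)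
    have e1 : i + 1 + m + 2 = i + m + 2 + 1 := by omega
    have e2 : i + 1 + m + 1 = i + m + 2 := by omega
    have g2 := genTie_succ (n := n) (i+1) m (by omega) (by omega)
    rw [e1, e2] at g2
    show TPM.p n i * TPM.genTie n i (i+m+2+1) = TPM.genTie n (i+1) (i+m+2+1) * TPM.p n i
    rw [g1, g2]
    have ihh := ih i hi (by omega)
    have hps : TPM.p n i * TPM.s n (i+m+2) = TPM.s n (i+m+2) * TPM.p n i :=
      p_s_far i (i+m+2) hi (by omega) (by omega) (by omega) (Or.inl (by omega))
    have hpsi : TPM.p n i * TPM.sInv n (i+m+2) = TPM.sInv n (i+m+2) * TPM.p n i :=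
      p_si_far i (i+m+2) hi (by omega) (by omega) (by omega) (Or.inl (by omega))
    calc TPM.p n i * (TPM.sInv n (i+m+2) * (TPM.genTie n i (i+m+2) * TPM.s n (i+m+2)))
        = TPM.sInv n (i+m+2) * (TPM.p n i * (TPM.genTie n i (i+m+2) * TPM.s n (i+m+2))) :=
          hswap hpsi _
      _ = TPM.sInv n (i+m+2) * (TPM.genTie n (i+1) (i+m+2) * (TPM.s n (i+m+2) * TPM.p n i)) := by
          rw [← mul_assoc (TPM.p n i), ihh, mul_assoc, hps]
      _ = TPM.sInv n (i+m+2) * (TPM.genTie n (i+1) (i+m+2) * TPM.s n (i+m+2)) * TPM.p n i := by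
          simp only [mul_assoc]

end TPMAux

/-- **Relation (i) of the generalized-tie relations in `TPM n`**: for every n ≥ 2 and
indices 1 ≤ i with i+1 < j ≤ n, p_i η_{i,j} = η_{i+1,j} p_i holds in `TPM n`. -/
theorem tpm_genTie_rel_i (n : ℕ) (hn : 2 ≤ n) (i j : ℕ)
    (hi : 1 ≤ i) (hij : i + 1 < j) (hj : j ≤ n) :
    TPM.p n i * TPM.genTie n i j = TPM.genTie n (i + 1) j * TPM.p n i := by
  obtain ⟨m, rfl⟩ : ∃ m, j = i + m + 2 := ⟨j - i - 2, by omega⟩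
  exact TPMAux.main m i hi (by omega)
end

section
/- Relation (iv) of the generalized-tie relations in the tied pseudo braid monoid: for every n ≥ 2 and all indices 1 ≤ i and i+1 < j ≤ n, the equality p_{j−1} η_{i,j} = η_{i,j−1} p_{j−1} holds in the tied pseudo braid monoid TPM_n. -/
section TPMAux

private lemma tpm_mk_mul {n : ℕ} (a b : FreeMonoid (TPMGen n)) :
    ((conGen (TPMRel n)).mk' a * (conGen (TPMRel n)).mk' b : TPM n)
      = (conGen (TPMRel n)).mk' (a * b) := rfl

private lemma tpm_mk_one {n : ℕ} :
    (1 : TPM n) = (conGen (TPMRel n)).mk' 1 := rfl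

private lemma tpm_rel_eq {n : ℕ} {a b : FreeMonoid (TPMGen n)} (h : TPMRel n a b) :
    (conGen (TPMRel n)).mk' a = (conGen (TPMRel n)).mk' b :=
  (Con.eq _).2 (ConGen.Rel.of a b h)

private lemma tpm_p_s_far {n m k : ℕ} (hm : 1 ≤ m ∧ m ≤ n-1) (hk : 1 ≤ k ∧ k ≤ n-1)
    (hf : m + 2 ≤ k ∨ k + 2 ≤ m) :
    TPM.p n m * TPM.s n k = TPM.s n k * TPM.p n m := by
  simp only [TPM.p, TPM.s, tpm_mk_mul]
  exact tpm_rel_eq (TPMRel.p_sig_far_pos m k hm hk hf)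

private lemma tpm_p_sInv_far {n m k : ℕ} (hm : 1 ≤ m ∧ m ≤ n-1) (hk : 1 ≤ k ∧ k ≤ n-1)
    (hf : m + 2 ≤ k ∨ k + 2 ≤ m) :
    TPM.p n m * TPM.sInv n k = TPM.sInv n k * TPM.p n m := by
  simp only [TPM.p, TPM.sInv, tpm_mk_mul]
  exact tpm_rel_eq (TPMRel.p_sig_far_neg m k hm hk hf)

private lemma tpm_eta_ps {n m : ℕ} (hm : 1 ≤ m ∧ m + 1 ≤ n-1) :
    TPM.e n m * TPM.p n (m+1) * TPM.s n m = TPM.p n (m+1) * TPM.s n m * TPM.e n (m+1) := by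
  simp only [TPM.e, TPM.p, TPM.s, tpm_mk_mul]
  exact tpm_rel_eq (TPMRel.eta_ps m (m+1) ⟨hm.1, by omega⟩ ⟨by omega, hm.2⟩ (Or.inl rfl))

private lemma tpm_s_sInv {n k : ℕ} (hk : 1 ≤ k ∧ k ≤ n-1) :
    TPM.s n k * TPM.sInv n k = 1 := by
  simp only [TPM.s, TPM.sInv, tpm_mk_mul, tpm_mk_one]
  exact tpm_rel_eq (TPMRel.inv_right k hk)

end TPMAux

theorem tpm_genTie_rel_iv' (n : ℕ) (hn : 2 ≤ n) (i j : ℕ)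
    (hi : 1 ≤ i) (hij : i + 1 < j) (hj : j ≤ n) :
    TPM.p n (j - 1) * TPM.genTie n i j = TPM.genTie n i (j - 1) * TPM.p n (j - 1) := by
  obtain ⟨m, rfl⟩ : ∃ m, j = m + 1 := ⟨j - 1, by omega⟩
  have hm1 : m + 1 - 1 = m := rfl
  have hm : 1 ≤ m ∧ m ≤ n - 1 := ⟨by omega, by omega⟩
  have hcnt : m - i = (m - 1 - i) + 1 := by omega
  have hrng : List.range' i (m - i) = List.range' i (m - 1 - i) ++ [m - 1] := by
    rw [hcnt]
    have h' : i + (m - 1 - i) = m - 1 := by omega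
    simpa [h'] using List.range'_concat (step := 1) (s := i) (n := m - 1 - i)
  set S : TPM n := ((List.range' i (m - 1 - i)).map (TPM.s n)).prod with hS
  set T : TPM n := ((List.range' i (m - 1 - i)).reverse.map (TPM.sInv n)).prod with hT
  have hmem : ∀ k ∈ List.range' i (m - 1 - i), (1 ≤ k ∧ k ≤ n - 1) ∧ k + 2 ≤ m := by
    intro k hk
    rw [List.mem_range'_1] at hk
    exact ⟨⟨by omega, by omega⟩, by omega⟩
  have cS : Commute (TPM.p n m) S := by
    apply Commute.list_prod_right
    intro x hx
    simp only [List.mem_map] at hx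
    obtain ⟨k, hk, rfl⟩ := hx
    exact tpm_p_s_far hm (hmem k hk).1 (Or.inr (hmem k hk).2)
  have cT : Commute (TPM.p n m) T := by
    apply Commute.list_prod_right
    intro x hx
    simp only [List.mem_map, List.mem_reverse] at hx
    obtain ⟨k, hk, rfl⟩ := hx
    exact tpm_p_sInv_far hm (hmem k hk).1 (Or.inr (hmem k hk).2)
  have hmm : m - 1 + 1 = m := by omega
  have key : TPM.e n (m-1) * TPM.p n m * TPM.s n (m-1)
      = TPM.p n m * TPM.s n (m-1) * TPM.e n m := by
    have h := tpm_eta_ps (n := n) (m := m - 1) ⟨by omega, by omega⟩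
    rwa [hmm] at h
  have hss : TPM.s n (m-1) * TPM.sInv n (m-1) = 1 :=
    tpm_s_sInv ⟨by omega, by omega⟩
  show TPM.p n m * ((((List.range' i (m+1-1-i)).map (TPM.s n)).prod) * TPM.e n (m+1-1) *
      (((List.range' i (m+1-1-i)).reverse.map (TPM.sInv n)).prod))
    = ((((List.range' i (m-1-i)).map (TPM.s n)).prod) * TPM.e n (m-1) *
      (((List.range' i (m-1-i)).reverse.map (TPM.sInv n)).prod)) * TPM.p n m
  rw [hm1, hrng]
  rw [List.reverse_append, List.map_append, List.prod_append,
      List.map_append, List.prod_append]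
  simp only [List.reverse_singleton, List.map_cons, List.map_nil, List.prod_cons,
    List.prod_nil, mul_one]
  rw [← hS, ← hT]
  have h1 : ∀ X : TPM n, TPM.p n m * (S * X) = S * (TPM.p n m * X) := by
    intro X; rw [← mul_assoc, cS.eq, mul_assoc]
  have h2 : ∀ Y : TPM n, TPM.p n m * (TPM.s n (m-1) * (TPM.e n m * Y))
      = TPM.e n (m-1) * (TPM.p n m * (TPM.s n (m-1) * Y)) := by
    intro Y
    rw [← mul_assoc, ← mul_assoc, ← key]
    simp only [mul_assoc]
  have h3 : TPM.s n (m-1) * (TPM.sInv n (m-1) * T) = T := by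
    rw [← mul_assoc, hss, one_mul]
  simp only [mul_assoc]
  rw [h1, h2, h3, cT.eq]

/-- **Relation (iv) of the generalized-tie relations in `TPM n`**: for every n ≥ 2 and
indices 1 ≤ i with i+1 < j ≤ n, p_{j−1} η_{i,j} = η_{i,j−1} p_{j−1} holds in `TPM n`. -/
theorem tpm_genTie_rel_iv (n : ℕ) (hn : 2 ≤ n) (i j : ℕ)
    (hi : 1 ≤ i) (hij : i + 1 < j) (hj : j ≤ n) :
    TPM.p n (j - 1) * TPM.genTie n i j = TPM.genTie n i (j - 1) * TPM.p n (j - 1) :=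
  tpm_genTie_rel_iv' n hn i j hi hij hj
end
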